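/- For every n ≥ 1, the number of overpartitions π of n such that ℓ_{O≥N}(π) is even equals the number of overpartitions λ of n such that ℓ_{O≤N}(λ) is even (and likewise with 'even' replaced by 'odd'). Here, for an overpartition with a non-overlined part, ℓ_{O≥N} counts overlined parts of size ≥ the smallest non-overlined part and ℓ_{O≤N} counts overlined parts of size ≤ the largest non-overlined part; for an overpartition with no non-overlined parts, both quantities equal the total number of parts. -/

import Mathlib

open scoped Classical

/-- An overpartition of `n`: a finite set of overlined part sizes (the first
occurrence of a size may be overlined, so overlined parts are distinct)
together with a multiset of non-overlined parts, all parts positive,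
with total sum `n`. -/
structure Overpartition (n : ℕ) where
  overl : Finset ℕ
  plain : Multiset ℕ
  over_pos : ∀ x ∈ overl, 0 < x
  plain_pos : ∀ x ∈ plain, 0 < x
  sum_eq : (∑ x ∈ overl, x) + plain.sum = n
/-- Number of overlined parts of size at least the smallest non-overlined part;
the total number of parts if there is no non-overlined part. -/
noncomputable def lOgeN {n : ℕ} (π : Overpartition n) : ℕ :=
  if π.plain = 0 then π.overl.card
  else (π.overl.filter (fun x => ∃ y ∈ π.plain, y ≤ x)).card

/-- Number of overlined parts of size at most the largest non-overlined part;
the total number of parts if there is no non-overlined part. -/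
noncomputable def lOleN {n : ℕ} (π : Overpartition n) : ℕ :=
  if π.plain = 0 then π.overl.card
  else (π.overl.filter (fun x => ∃ y ∈ π.plain, x ≤ y)).card

namespace Overpartition

variable {n : ℕ}

@[ext] lemma ext {π σ : Overpartition n} (h1 : π.overl = σ.overl) (h2 : π.plain = σ.plain) :
    π = σ := by
  cases π; cases σ; simp_all

lemma card_le_sum (s : Multiset ℕ) (h : ∀ x ∈ s, 0 < x) : Multiset.card s ≤ s.sum := by
  induction s using Multiset.induction with
  | empty => simp
  | cons a s ih =>
    simp only [Multiset.card_cons, Multiset.sum_cons]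
    have ha := h a (Multiset.mem_cons_self a s)
    have := ih (fun x hx => h x (Multiset.mem_cons_of_mem hx))
    omega

instance : Finite (Overpartition n) := by
  classical
  have : ∀ π : Overpartition n, π.overl ∈ (Finset.range (n+1)).powerset ∧
      π.plain ∈ (Multiset.powerset (n • (Multiset.range (n+1)))).toFinset := by
    intro π
    constructor
    · rw [Finset.mem_powerset]
      intro x hx
      have h1 : x ≤ ∑ y ∈ π.overl, y :=
        Finset.single_le_sum (fun i _ => Nat.zero_le i) hx
      have := π.sum_eq
      simp only [Finset.mem_range]; omega
    · rw [Multiset.mem_toFinset, Multiset.mem_powerset, Multiset.le_iff_count]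
      intro a
      rw [Multiset.count_nsmul]
      by_cases ha : a ∈ π.plain
      · have h1 : a ≤ π.plain.sum := Multiset.single_le_sum (fun x _ => Nat.zero_le x) a ha
        have h2 : Multiset.count a π.plain ≤ Multiset.card π.plain := Multiset.count_le_card a _
        have h3 : Multiset.card π.plain ≤ π.plain.sum := card_le_sum _ π.plain_pos
        have h4 := π.sum_eq
        have ha' : a ∈ Multiset.range (n+1) := by
          rw [Multiset.mem_range]; omega
        have : 1 ≤ Multiset.count a (Multiset.range (n+1)) := Multiset.one_le_count_iff_mem.2 ha'
        calc Multiset.count a π.plain ≤ Multiset.card π.plain := h2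
          _ ≤ n := by omega
          _ ≤ n * Multiset.count a (Multiset.range (n+1)) := Nat.le_mul_of_pos_right n this
      · simp [Multiset.count_eq_zero.2 ha]
  exact Finite.of_injective
    (fun π : Overpartition n =>
      ((⟨π.overl, (this π).1⟩ : {s // s ∈ (Finset.range (n+1)).powerset}),
       (⟨π.plain, (this π).2⟩ : {m // m ∈ (Multiset.powerset (n • (Multiset.range (n+1)))).toFinset})))
    (by intro a b hab; simp only [Prod.mk.injEq, Subtype.mk.injEq] at hab; exact ext hab.1 hab.2)

noncomputable instance : Fintype (Overpartition n) := Fintype.ofFinite _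

/-- smallest plain part (junk `sInf ∅ = 0` if none) -/
noncomputable def mP (π : Overpartition n) : ℕ := sInf {x | x ∈ π.plain}

/-- largest plain part -/
noncomputable def MP (π : Overpartition n) : ℕ := sSup {x | x ∈ π.plain}

lemma plain_bdd (π : Overpartition n) : BddAbove {x | x ∈ π.plain} :=
  ⟨π.plain.sum, fun y hy => Multiset.single_le_sum (fun x _ => Nat.zero_le x) y hy⟩

lemma mP_mem {π : Overpartition n} (hp : π.plain ≠ 0) : mP π ∈ π.plain := by
  obtain ⟨y, hy⟩ := Multiset.exists_mem_of_ne_zero hp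
  exact Nat.sInf_mem ⟨y, show y ∈ {x | x ∈ π.plain} from hy⟩

lemma mP_le {π : Overpartition n} {y : ℕ} (hy : y ∈ π.plain) : mP π ≤ y := Nat.sInf_le hy

lemma MP_mem {π : Overpartition n} (hp : π.plain ≠ 0) : MP π ∈ π.plain := by
  obtain ⟨y, hy⟩ := Multiset.exists_mem_of_ne_zero hp
  exact Nat.sSup_mem ⟨y, show y ∈ {x | x ∈ π.plain} from hy⟩ (plain_bdd π)

lemma le_MP {π : Overpartition n} {y : ℕ} (hy : y ∈ π.plain) : y ≤ MP π :=
  le_csSup (plain_bdd π) hy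

lemma lOgeN_eq {π : Overpartition n} (hp : π.plain ≠ 0) :
    lOgeN π = (π.overl.filter (fun x => mP π ≤ x)).card := by
  rw [lOgeN, if_neg hp]
  congr 1
  apply Finset.filter_congr
  intro x _
  constructor
  · rintro ⟨y, hy, hyx⟩; exact le_trans (mP_le hy) hyx
  · intro h; exact ⟨mP π, mP_mem hp, h⟩

lemma lOleN_eq {π : Overpartition n} (hp : π.plain ≠ 0) :
    lOleN π = (π.overl.filter (fun x => x ≤ MP π)).card := by
  rw [lOleN, if_neg hp]
  congr 1
  apply Finset.filter_congr
  intro x _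
  constructor
  · rintro ⟨y, hy, hxy⟩; exact le_trans hxy (le_MP hy)
  · intro h; exact ⟨MP π, MP_mem hp, h⟩

lemma mP_eq {π : Overpartition n} {m : ℕ} (hm : m ∈ π.plain) (hle : ∀ y ∈ π.plain, m ≤ y) :
    mP π = m :=
  le_antisymm (mP_le hm) (hle _ (mP_mem (by intro h; rw [h] at hm; simp at hm)))

lemma mem_add_singleton_erase {s : Multiset ℕ} {a c : ℕ} (hc : c ∈ s) :
    a ∈ (s + {a}).erase c := by
  by_cases hac : a = c
  · rw [hac, ← Multiset.count_pos, Multiset.count_erase_self, Multiset.count_add,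
      Multiset.count_singleton, if_pos rfl]
    have : 0 < Multiset.count c s := Multiset.count_pos.2 hc
    omega
  · rw [Multiset.mem_erase_of_ne hac, Multiset.mem_add]
    exact Or.inr (Multiset.mem_singleton.2 rfl)

/-- active set for the `≥` side -/
noncomputable def actG (π : Overpartition n) : Finset ℕ :=
  (π.overl.filter (fun x => mP π ≤ x)) ∪ (π.plain.erase (mP π)).toFinset

lemma mP_le_of_mem_actG {π : Overpartition n} {x : ℕ} (hx : x ∈ actG π) : mP π ≤ x := by
  rw [actG, Finset.mem_union] at hx
  rcases hx with hx | hx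
  · exact (Finset.mem_filter.1 hx).2
  · exact mP_le (Multiset.mem_of_mem_erase (Multiset.mem_toFinset.1 hx))

lemma mem_plain_of_actG_not_over {π : Overpartition n} {x : ℕ} (hx : x ∈ actG π)
    (hxo : x ∉ π.overl) : x ∈ π.plain.erase (mP π) := by
  rw [actG, Finset.mem_union] at hx
  rcases hx with hx | hx
  · exact absurd (Finset.mem_filter.1 hx).1 hxo
  · exact Multiset.mem_toFinset.1 hx

/-- distinguished element for the `≥` side -/
noncomputable def jG (π : Overpartition n) : ℕ := ((actG π).max).getD 0

lemma jG_mem {π : Overpartition n} (hne : (actG π).Nonempty) : jG π ∈ actG π := by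
  obtain ⟨j, hj⟩ := Finset.max_of_nonempty hne
  rw [jG, hj]
  exact Finset.mem_of_max hj

lemma le_jG {π : Overpartition n} {x : ℕ} (hx : x ∈ actG π) : x ≤ jG π := by
  have h1 := Finset.le_max hx
  obtain ⟨j, hj⟩ := Finset.max_of_nonempty ⟨x, hx⟩
  rw [jG, hj]
  rw [hj] at h1
  exact_mod_cast h1

lemma jG_eq {π : Overpartition n} {j : ℕ} (hmem : j ∈ actG π) (hub : ∀ x ∈ actG π, x ≤ j) :
    jG π = j :=
  le_antisymm (hub _ (jG_mem ⟨j, hmem⟩)) (le_jG hmem)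

/-- the toggle map for the `≥` side -/
noncomputable def togG (π : Overpartition n) : Overpartition n :=
  if hj : jG π ∈ π.overl then
    { overl := π.overl.erase (jG π)
      plain := π.plain + {jG π}
      over_pos := fun x hx => π.over_pos x (Finset.mem_of_mem_erase hx)
      plain_pos := by
        intro x hx
        rw [Multiset.mem_add] at hx
        rcases hx with hx | hx
        · exact π.plain_pos x hx
        · rw [Multiset.mem_singleton] at hx
          subst hx
          exact π.over_pos _ hj
      sum_eq := by
        have h1 := Finset.sum_erase_add π.overl id hj
        have h2 := π.sum_eq
        simp only [id] at h1
        rw [Multiset.sum_add, Multiset.sum_singleton]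
        omega }
  else if hp : jG π ∈ π.plain then
    { overl := insert (jG π) π.overl
      plain := π.plain.erase (jG π)
      over_pos := by
        intro x hx
        rw [Finset.mem_insert] at hx
        rcases hx with rfl | hx
        · exact π.plain_pos _ hp
        · exact π.over_pos x hx
      plain_pos := fun x hx => π.plain_pos x (Multiset.mem_of_mem_erase hx)
      sum_eq := by
        have h1 : (π.plain.erase (jG π)).sum + jG π = π.plain.sum := by
          conv_rhs => rw [← Multiset.cons_erase hp]
          rw [Multiset.sum_cons]; omega
        rw [Finset.sum_insert hj]
        have h2 := π.sum_eq
        omega }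
  else π

lemma togG_eq_pos {π : Overpartition n} (hj : jG π ∈ π.overl) :
    (togG π).overl = π.overl.erase (jG π) ∧ (togG π).plain = π.plain + {jG π} := by
  rw [togG, dif_pos hj]
  exact ⟨rfl, rfl⟩

lemma togG_eq_neg {π : Overpartition n} (hj : jG π ∉ π.overl) (hp : jG π ∈ π.plain) :
    (togG π).overl = insert (jG π) π.overl ∧ (togG π).plain = π.plain.erase (jG π) := by
  rw [togG, dif_neg hj, dif_pos hp]
  exact ⟨rfl, rfl⟩

/-- Main structural lemma for the toggle on the `≥` side. -/
lemma togG_spec {π : Overpartition n} (hp : π.plain ≠ 0) (hne : (actG π).Nonempty) :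
    (togG π).plain ≠ 0 ∧ (actG (togG π)).Nonempty ∧ togG (togG π) = π ∧
      (lOgeN (togG π) = lOgeN π + 1 ∨ lOgeN π = lOgeN (togG π) + 1) := by
  set σ := togG π with hσdef
  set j := jG π with hjdef
  set m := mP π with hmdef
  have hmm : m ∈ π.plain := mP_mem hp
  have hmj : m ≤ j := mP_le_of_mem_actG (jG_mem hne)
  by_cases hj : j ∈ π.overl
  · -- case 1 : j moves from over to plain
    obtain ⟨hOv, hPl⟩ := togG_eq_pos hj
    have hjK : j ∈ π.overl.filter (fun x => m ≤ x) := Finset.mem_filter.2 ⟨hj, hmj⟩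
    have hσp : σ.plain ≠ 0 := by
      rw [hPl]; simp
    have hmσ : mP σ = m := by
      apply mP_eq
      · rw [hPl, Multiset.mem_add]; exact Or.inl hmm
      · intro y hy
        rw [hPl, Multiset.mem_add] at hy
        rcases hy with hy | hy
        · exact mP_le hy
        · rw [Multiset.mem_singleton] at hy; subst hy; exact hmj
    have hjσm : j ∈ σ.plain.erase (mP σ) := by
      rw [hmσ, hPl]
      exact mem_add_singleton_erase hmm
    have hjσ : j ∈ actG σ := Finset.mem_union_right _ (Multiset.mem_toFinset.2 hjσm)
    have hub : ∀ x ∈ actG σ, x ≤ j := by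
      intro x hx
      rw [actG, Finset.mem_union] at hx
      rcases hx with hx | hx
      · rw [Finset.mem_filter, hOv, hmσ] at hx
        exact le_jG (Finset.mem_union_left _
          (Finset.mem_filter.2 ⟨Finset.mem_of_mem_erase hx.1, hx.2⟩))
      · rw [Multiset.mem_toFinset, hmσ, hPl] at hx
        have hx' := Multiset.mem_of_mem_erase hx
        rw [Multiset.mem_add] at hx'
        rcases hx' with hx' | hx'
        · by_cases hxm : x = m
          · rw [hxm]; exact hmj
          · exact le_jG (Finset.mem_union_right _
              (Multiset.mem_toFinset.2 ((Multiset.mem_erase_of_ne hxm).2 hx')))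
        · rw [Multiset.mem_singleton] at hx'; exact le_of_eq hx'
    have hjσeq : jG σ = j := jG_eq hjσ hub
    have hjno : j ∉ σ.overl := by rw [hOv]; exact Finset.notMem_erase _ _
    have hjpl : j ∈ σ.plain := Multiset.mem_of_mem_erase hjσm
    refine ⟨hσp, ⟨j, hjσ⟩, ?_, ?_⟩
    · obtain ⟨hOv2, hPl2⟩ := togG_eq_neg (hjσeq ▸ hjno) (hjσeq ▸ hjpl)
      apply Overpartition.ext
      · rw [hOv2, hjσeq, hOv, Finset.insert_erase hj]
      · rw [hPl2, hjσeq, hPl, add_comm, Multiset.singleton_add, Multiset.erase_cons_head]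
    · right
      rw [lOgeN_eq hp, lOgeN_eq hσp, hmσ, hOv, ← hmdef, Finset.filter_erase,
        Finset.card_erase_of_mem hjK]
      have : 0 < (π.overl.filter (fun x => m ≤ x)).card := Finset.card_pos.2 ⟨j, hjK⟩
      omega
  · -- case 2 : j moves from plain to over
    have hjpe : j ∈ π.plain.erase m := mem_plain_of_actG_not_over (jG_mem hne) hj
    have hjpl : j ∈ π.plain := Multiset.mem_of_mem_erase hjpe
    obtain ⟨hOv, hPl⟩ := togG_eq_neg hj hjpl
    have hmσmem : m ∈ π.plain.erase j := by
      by_cases hjm : m = j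
      · rw [hjm]; rw [hjm] at hjpe; exact hjpe
      · exact (Multiset.mem_erase_of_ne hjm).2 hmm
    have hσp : σ.plain ≠ 0 := by
      rw [hPl]
      intro hc
      rw [hc] at hmσmem
      simp at hmσmem
    have hmσ : mP σ = m := by
      apply mP_eq
      · rw [hPl]; exact hmσmem
      · intro y hy
        rw [hPl] at hy
        exact mP_le (Multiset.mem_of_mem_erase hy)
    have hjσ : j ∈ actG σ := by
      apply Finset.mem_union_left
      rw [Finset.mem_filter, hOv, hmσ]
      exact ⟨Finset.mem_insert_self _ _, hmj⟩
    have hub : ∀ x ∈ actG σ, x ≤ j := by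
      intro x hx
      rw [actG, Finset.mem_union] at hx
      rcases hx with hx | hx
      · rw [Finset.mem_filter, hOv, hmσ, Finset.mem_insert] at hx
        rcases hx.1 with rfl | hx1
        · exact le_rfl
        · exact le_jG (Finset.mem_union_left _ (Finset.mem_filter.2 ⟨hx1, hx.2⟩))
      · rw [Multiset.mem_toFinset, hmσ, hPl, Multiset.erase_comm] at hx
        exact le_jG (Finset.mem_union_right _
          (Multiset.mem_toFinset.2 (Multiset.mem_of_mem_erase hx)))
    have hjσeq : jG σ = j := jG_eq hjσ hub
    have hjyes : j ∈ σ.overl := by rw [hOv]; exact Finset.mem_insert_self _ _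
    refine ⟨hσp, ⟨j, hjσ⟩, ?_, ?_⟩
    · obtain ⟨hOv2, hPl2⟩ := togG_eq_pos (hjσeq ▸ hjyes)
      apply Overpartition.ext
      · rw [hOv2, hjσeq, hOv, Finset.erase_insert hj]
      · rw [hPl2, hjσeq, hPl, add_comm, Multiset.singleton_add, Multiset.cons_erase hjpl]
    · left
      rw [lOgeN_eq hp, lOgeN_eq hσp, hmσ, hOv, ← hmdef, Finset.filter_insert, if_pos hmj,
        Finset.card_insert_of_notMem (fun hc => hj (Finset.mem_filter.1 hc).1)]

lemma MP_eq {π : Overpartition n} {m : ℕ} (hm : m ∈ π.plain) (hle : ∀ y ∈ π.plain, y ≤ m) :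
    MP π = m :=
  le_antisymm (hle _ (MP_mem (by intro h; rw [h] at hm; simp at hm))) (le_MP hm)

/-- active set for the `≤` side -/
noncomputable def actL (π : Overpartition n) : Finset ℕ :=
  (π.overl.filter (fun x => x ≤ MP π)) ∪ (π.plain.erase (MP π)).toFinset

lemma le_MP_of_mem_actL {π : Overpartition n} {x : ℕ} (hx : x ∈ actL π) : x ≤ MP π := by
  rw [actL, Finset.mem_union] at hx
  rcases hx with hx | hx
  · exact (Finset.mem_filter.1 hx).2
  · exact le_MP (Multiset.mem_of_mem_erase (Multiset.mem_toFinset.1 hx))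

lemma mem_plain_of_actL_not_over {π : Overpartition n} {x : ℕ} (hx : x ∈ actL π)
    (hxo : x ∉ π.overl) : x ∈ π.plain.erase (MP π) := by
  rw [actL, Finset.mem_union] at hx
  rcases hx with hx | hx
  · exact absurd (Finset.mem_filter.1 hx).1 hxo
  · exact Multiset.mem_toFinset.1 hx

/-- distinguished element for the `≤` side -/
noncomputable def jL (π : Overpartition n) : ℕ := ((actL π).min).getD 0

lemma jL_mem {π : Overpartition n} (hne : (actL π).Nonempty) : jL π ∈ actL π := by
  obtain ⟨j, hj⟩ := Finset.min_of_nonempty hne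
  rw [jL, hj]
  exact Finset.mem_of_min hj

lemma jL_le {π : Overpartition n} {x : ℕ} (hx : x ∈ actL π) : jL π ≤ x := by
  have h1 := Finset.min_le hx
  obtain ⟨j, hj⟩ := Finset.min_of_nonempty ⟨x, hx⟩
  rw [jL, hj]
  rw [hj] at h1
  exact_mod_cast h1

lemma jL_eq {π : Overpartition n} {j : ℕ} (hmem : j ∈ actL π) (hlb : ∀ x ∈ actL π, j ≤ x) :
    jL π = j :=
  le_antisymm (jL_le hmem) (hlb _ (jL_mem ⟨j, hmem⟩))

/-- the toggle map for the `≤` side -/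
noncomputable def togL (π : Overpartition n) : Overpartition n :=
  if hj : jL π ∈ π.overl then
    { overl := π.overl.erase (jL π)
      plain := π.plain + {jL π}
      over_pos := fun x hx => π.over_pos x (Finset.mem_of_mem_erase hx)
      plain_pos := by
        intro x hx
        rw [Multiset.mem_add] at hx
        rcases hx with hx | hx
        · exact π.plain_pos x hx
        · rw [Multiset.mem_singleton] at hx
          subst hx
          exact π.over_pos _ hj
      sum_eq := by
        have h1 := Finset.sum_erase_add π.overl id hj
        have h2 := π.sum_eq
        simp only [id] at h1
        rw [Multiset.sum_add, Multiset.sum_singleton]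
        omega }
  else if hp : jL π ∈ π.plain then
    { overl := insert (jL π) π.overl
      plain := π.plain.erase (jL π)
      over_pos := by
        intro x hx
        rw [Finset.mem_insert] at hx
        rcases hx with rfl | hx
        · exact π.plain_pos _ hp
        · exact π.over_pos x hx
      plain_pos := fun x hx => π.plain_pos x (Multiset.mem_of_mem_erase hx)
      sum_eq := by
        have h1 : (π.plain.erase (jL π)).sum + jL π = π.plain.sum := by
          conv_rhs => rw [← Multiset.cons_erase hp]
          rw [Multiset.sum_cons]; omega
        rw [Finset.sum_insert hj]
        have h2 := π.sum_eq
        omega }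
  else π

lemma togL_eq_pos {π : Overpartition n} (hj : jL π ∈ π.overl) :
    (togL π).overl = π.overl.erase (jL π) ∧ (togL π).plain = π.plain + {jL π} := by
  rw [togL, dif_pos hj]
  exact ⟨rfl, rfl⟩

lemma togL_eq_neg {π : Overpartition n} (hj : jL π ∉ π.overl) (hp : jL π ∈ π.plain) :
    (togL π).overl = insert (jL π) π.overl ∧ (togL π).plain = π.plain.erase (jL π) := by
  rw [togL, dif_neg hj, dif_pos hp]
  exact ⟨rfl, rfl⟩

/-- Main structural lemma for the toggle on the `≤` side. -/
lemma togL_spec {π : Overpartition n} (hp : π.plain ≠ 0) (hne : (actL π).Nonempty) :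
    (togL π).plain ≠ 0 ∧ (actL (togL π)).Nonempty ∧ togL (togL π) = π ∧
      (lOleN (togL π) = lOleN π + 1 ∨ lOleN π = lOleN (togL π) + 1) := by
  set σ := togL π with hσdef
  set j := jL π with hjdef
  set m := MP π with hmdef
  have hmm : m ∈ π.plain := MP_mem hp
  have hmj : j ≤ m := le_MP_of_mem_actL (jL_mem hne)
  by_cases hj : j ∈ π.overl
  · -- case 1 : j moves from over to plain
    obtain ⟨hOv, hPl⟩ := togL_eq_pos hj
    have hjK : j ∈ π.overl.filter (fun x => x ≤ m) := Finset.mem_filter.2 ⟨hj, hmj⟩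
    have hσp : σ.plain ≠ 0 := by
      rw [hPl]; simp
    have hmσ : MP σ = m := by
      apply MP_eq
      · rw [hPl, Multiset.mem_add]; exact Or.inl hmm
      · intro y hy
        rw [hPl, Multiset.mem_add] at hy
        rcases hy with hy | hy
        · exact le_MP hy
        · rw [Multiset.mem_singleton] at hy; subst hy; exact hmj
    have hjσm : j ∈ σ.plain.erase (MP σ) := by
      rw [hmσ, hPl]
      exact mem_add_singleton_erase hmm
    have hjσ : j ∈ actL σ := Finset.mem_union_right _ (Multiset.mem_toFinset.2 hjσm)
    have hlb : ∀ x ∈ actL σ, j ≤ x := by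
      intro x hx
      rw [actL, Finset.mem_union] at hx
      rcases hx with hx | hx
      · rw [Finset.mem_filter, hOv, hmσ] at hx
        exact jL_le (Finset.mem_union_left _
          (Finset.mem_filter.2 ⟨Finset.mem_of_mem_erase hx.1, hx.2⟩))
      · rw [Multiset.mem_toFinset, hmσ, hPl] at hx
        have hx' := Multiset.mem_of_mem_erase hx
        rw [Multiset.mem_add] at hx'
        rcases hx' with hx' | hx'
        · by_cases hxm : x = m
          · rw [hxm]; exact hmj
          · exact jL_le (Finset.mem_union_right _
              (Multiset.mem_toFinset.2 ((Multiset.mem_erase_of_ne hxm).2 hx')))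
        · rw [Multiset.mem_singleton] at hx'; exact ge_of_eq hx'
    have hjσeq : jL σ = j := jL_eq hjσ hlb
    have hjno : j ∉ σ.overl := by rw [hOv]; exact Finset.notMem_erase _ _
    have hjpl : j ∈ σ.plain := Multiset.mem_of_mem_erase hjσm
    refine ⟨hσp, ⟨j, hjσ⟩, ?_, ?_⟩
    · obtain ⟨hOv2, hPl2⟩ := togL_eq_neg (hjσeq ▸ hjno) (hjσeq ▸ hjpl)
      apply Overpartition.ext
      · rw [hOv2, hjσeq, hOv, Finset.insert_erase hj]
      · rw [hPl2, hjσeq, hPl, add_comm, Multiset.singleton_add, Multiset.erase_cons_head]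
    · right
      rw [lOleN_eq hp, lOleN_eq hσp, hmσ, hOv, ← hmdef, Finset.filter_erase,
        Finset.card_erase_of_mem hjK]
      have : 0 < (π.overl.filter (fun x => x ≤ m)).card := Finset.card_pos.2 ⟨j, hjK⟩
      omega
  · -- case 2 : j moves from plain to over
    have hjpe : j ∈ π.plain.erase m := mem_plain_of_actL_not_over (jL_mem hne) hj
    have hjpl : j ∈ π.plain := Multiset.mem_of_mem_erase hjpe
    obtain ⟨hOv, hPl⟩ := togL_eq_neg hj hjpl
    have hmσmem : m ∈ π.plain.erase j := by
      by_cases hjm : m = j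
      · rw [hjm]; rw [hjm] at hjpe; exact hjpe
      · exact (Multiset.mem_erase_of_ne hjm).2 hmm
    have hσp : σ.plain ≠ 0 := by
      rw [hPl]
      intro hc
      rw [hc] at hmσmem
      simp at hmσmem
    have hmσ : MP σ = m := by
      apply MP_eq
      · rw [hPl]; exact hmσmem
      · intro y hy
        rw [hPl] at hy
        exact le_MP (Multiset.mem_of_mem_erase hy)
    have hjσ : j ∈ actL σ := by
      apply Finset.mem_union_left
      rw [Finset.mem_filter, hOv, hmσ]
      exact ⟨Finset.mem_insert_self _ _, hmj⟩
    have hlb : ∀ x ∈ actL σ, j ≤ x := by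
      intro x hx
      rw [actL, Finset.mem_union] at hx
      rcases hx with hx | hx
      · rw [Finset.mem_filter, hOv, hmσ, Finset.mem_insert] at hx
        rcases hx.1 with rfl | hx1
        · exact le_rfl
        · exact jL_le (Finset.mem_union_left _ (Finset.mem_filter.2 ⟨hx1, hx.2⟩))
      · rw [Multiset.mem_toFinset, hmσ, hPl, Multiset.erase_comm] at hx
        exact jL_le (Finset.mem_union_right _
          (Multiset.mem_toFinset.2 (Multiset.mem_of_mem_erase hx)))
    have hjσeq : jL σ = j := jL_eq hjσ hlb
    have hjyes : j ∈ σ.overl := by rw [hOv]; exact Finset.mem_insert_self _ _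
    refine ⟨hσp, ⟨j, hjσ⟩, ?_, ?_⟩
    · obtain ⟨hOv2, hPl2⟩ := togL_eq_pos (hjσeq ▸ hjyes)
      apply Overpartition.ext
      · rw [hOv2, hjσeq, hOv, Finset.erase_insert hj]
      · rw [hPl2, hjσeq, hPl, add_comm, Multiset.singleton_add, Multiset.cons_erase hjpl]
    · left
      rw [lOleN_eq hp, lOleN_eq hσp, hmσ, hOv, ← hmdef, Finset.filter_insert, if_pos hmj,
        Finset.card_insert_of_notMem (fun hc => hj (Finset.mem_filter.1 hc).1)]

lemma max'_insert_gt {a : ℕ} {s : Finset ℕ} (h : ∀ x ∈ s, x < a) (hne : (insert a s).Nonempty) :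
    (insert a s).max' hne = a := by
  apply le_antisymm
  · apply Finset.max'_le
    intro y hy
    rcases Finset.mem_insert.1 hy with rfl | hy
    · exact le_rfl
    · exact (h y hy).le
  · exact Finset.le_max' _ _ (Finset.mem_insert_self _ _)

lemma min'_insert_lt {a : ℕ} {s : Finset ℕ} (h : ∀ x ∈ s, a < x) (hne : (insert a s).Nonempty) :
    (insert a s).min' hne = a := by
  apply le_antisymm
  · exact Finset.min'_le _ _ (Finset.mem_insert_self _ _)
  · apply Finset.le_min'
    intro y hy
    rcases Finset.mem_insert.1 hy with rfl | hy
    · exact le_rfl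
    · exact (h y hy).le

/-- characterization of fixed points on the `≥` side -/
lemma fixG_iff {π : Overpartition n} :
    (π.plain ≠ 0 ∧ ¬(actG π).Nonempty) ↔
      π.plain = {mP π} ∧ (∀ x ∈ π.overl, x < mP π) ∧ 0 < mP π := by
  constructor
  · rintro ⟨hp, hne⟩
    rw [Finset.not_nonempty_iff_eq_empty, actG, Finset.union_eq_empty] at hne
    have h1 : ∀ x ∈ π.overl, x < mP π := by
      intro x hx
      by_contra hc
      push_neg at hc
      have : x ∈ (π.overl.filter (fun x => mP π ≤ x)) := Finset.mem_filter.2 ⟨hx, hc⟩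
      rw [hne.1] at this
      simp at this
    have h2 : π.plain.erase (mP π) = 0 := by
      have := hne.2
      rwa [Multiset.toFinset_eq_empty] at this
    have h3 : π.plain = {mP π} := by
      conv_lhs => rw [← Multiset.cons_erase (mP_mem hp)]
      rw [h2]
      rfl
    exact ⟨h3, h1, π.plain_pos _ (mP_mem hp)⟩
  · rintro ⟨h1, h2, h3⟩
    constructor
    · rw [h1]; simp
    · rw [Finset.not_nonempty_iff_eq_empty, actG, Finset.union_eq_empty]
      constructor
      · rw [Finset.filter_eq_empty_iff]
        intro x hx
        exact not_le.2 (h2 x hx)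
      · rw [Multiset.toFinset_eq_empty, h1, Multiset.erase_singleton]
  
/-- characterization of fixed points on the `≤` side -/
lemma fixL_iff {π : Overpartition n} :
    (π.plain ≠ 0 ∧ ¬(actL π).Nonempty) ↔
      π.plain = {MP π} ∧ (∀ x ∈ π.overl, MP π < x) ∧ 0 < MP π := by
  constructor
  · rintro ⟨hp, hne⟩
    rw [Finset.not_nonempty_iff_eq_empty, actL, Finset.union_eq_empty] at hne
    have h1 : ∀ x ∈ π.overl, MP π < x := by
      intro x hx
      by_contra hc
      push_neg at hc
      have : x ∈ (π.overl.filter (fun x => x ≤ MP π)) := Finset.mem_filter.2 ⟨hx, hc⟩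
      rw [hne.1] at this
      simp at this
    have h2 : π.plain.erase (MP π) = 0 := by
      have := hne.2
      rwa [Multiset.toFinset_eq_empty] at this
    have h3 : π.plain = {MP π} := by
      conv_lhs => rw [← Multiset.cons_erase (MP_mem hp)]
      rw [h2]
      rfl
    exact ⟨h3, h1, π.plain_pos _ (MP_mem hp)⟩
  · rintro ⟨h1, h2, h3⟩
    constructor
    · rw [h1]; simp
    · rw [Finset.not_nonempty_iff_eq_empty, actL, Finset.union_eq_empty]
      constructor
      · rw [Finset.filter_eq_empty_iff]
        intro x hx
        exact not_le.2 (h2 x hx)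
      · rw [Multiset.toFinset_eq_empty, h1, Multiset.erase_singleton]

/-- fixed points on either side have statistic zero -/
lemma lOgeN_fix {π : Overpartition n} (h : π.plain ≠ 0 ∧ ¬(actG π).Nonempty) : lOgeN π = 0 := by
  rw [lOgeN_eq h.1, Finset.card_eq_zero, Finset.filter_eq_empty_iff]
  intro x hx
  exact not_le.2 ((fixG_iff.1 h).2.1 x hx)

lemma lOleN_fix {π : Overpartition n} (h : π.plain ≠ 0 ∧ ¬(actL π).Nonempty) : lOleN π = 0 := by
  rw [lOleN_eq h.1, Finset.card_eq_zero, Finset.filter_eq_empty_iff]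
  intro x hx
  exact not_le.2 ((fixL_iff.1 h).2.1 x hx)

/-- the bijection fixG → fixL -/
noncomputable def ΦG (π : Overpartition n) : Overpartition n :=
  if h : π.plain = {mP π} ∧ (∀ x ∈ π.overl, x < mP π) ∧ 0 < mP π then
    { overl := (insert (mP π) π.overl).erase
        ((insert (mP π) π.overl).min' (Finset.insert_nonempty _ _))
      plain := {(insert (mP π) π.overl).min' (Finset.insert_nonempty _ _)}
      over_pos := by
        intro x hx
        rcases Finset.mem_insert.1 (Finset.mem_of_mem_erase hx) with rfl | hx'
        · exact h.2.2
        · exact π.over_pos x hx'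
      plain_pos := by
        intro x hx
        rw [Multiset.mem_singleton] at hx
        subst hx
        rcases Finset.mem_insert.1 (Finset.min'_mem (insert (mP π) π.overl) (Finset.insert_nonempty _ _)) with h' | h'
        · rw [h']; exact h.2.2
        · exact π.over_pos _ h'
      sum_eq := by
        have hmo : mP π ∉ π.overl := fun hc => lt_irrefl _ (h.2.1 _ hc)
        have hcm : (insert (mP π) π.overl).min' (Finset.insert_nonempty _ _) ∈
            insert (mP π) π.overl := Finset.min'_mem _ _
        have h1 := Finset.sum_erase_add (insert (mP π) π.overl) id hcm
        have h2 : ∑ x ∈ insert (mP π) π.overl, x = mP π + ∑ x ∈ π.overl, x :=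
          Finset.sum_insert hmo
        have h3 := π.sum_eq
        rw [h.1] at h3
        simp only [id] at h1
        rw [Multiset.sum_singleton]
        rw [Multiset.sum_singleton] at h3
        omega }
  else π

/-- the bijection fixL → fixG -/
noncomputable def ΦL (π : Overpartition n) : Overpartition n :=
  if h : π.plain = {MP π} ∧ (∀ x ∈ π.overl, MP π < x) ∧ 0 < MP π then
    { overl := (insert (MP π) π.overl).erase
        ((insert (MP π) π.overl).max' (Finset.insert_nonempty _ _))
      plain := {(insert (MP π) π.overl).max' (Finset.insert_nonempty _ _)}
      over_pos := by
        intro x hx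
        rcases Finset.mem_insert.1 (Finset.mem_of_mem_erase hx) with rfl | hx'
        · exact h.2.2
        · exact π.over_pos x hx'
      plain_pos := by
        intro x hx
        rw [Multiset.mem_singleton] at hx
        subst hx
        rcases Finset.mem_insert.1 (Finset.max'_mem (insert (MP π) π.overl) (Finset.insert_nonempty _ _)) with h' | h'
        · rw [h']; exact h.2.2
        · exact π.over_pos _ h'
      sum_eq := by
        have hmo : MP π ∉ π.overl := fun hc => lt_irrefl _ (h.2.1 _ hc)
        have hcm : (insert (MP π) π.overl).max' (Finset.insert_nonempty _ _) ∈
            insert (MP π) π.overl := Finset.max'_mem _ _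
        have h1 := Finset.sum_erase_add (insert (MP π) π.overl) id hcm
        have h2 : ∑ x ∈ insert (MP π) π.overl, x = MP π + ∑ x ∈ π.overl, x :=
          Finset.sum_insert hmo
        have h3 := π.sum_eq
        rw [h.1] at h3
        simp only [id] at h1
        rw [Multiset.sum_singleton]
        rw [Multiset.sum_singleton] at h3
        omega }
  else π

lemma ΦG_eq {π : Overpartition n}
    (h : π.plain = {mP π} ∧ (∀ x ∈ π.overl, x < mP π) ∧ 0 < mP π) :
    (ΦG π).overl = (insert (mP π) π.overl).erase
        ((insert (mP π) π.overl).min' (Finset.insert_nonempty _ _)) ∧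
    (ΦG π).plain = {(insert (mP π) π.overl).min' (Finset.insert_nonempty _ _)} := by
  rw [ΦG, dif_pos h]
  exact ⟨rfl, rfl⟩

lemma ΦL_eq {π : Overpartition n}
    (h : π.plain = {MP π} ∧ (∀ x ∈ π.overl, MP π < x) ∧ 0 < MP π) :
    (ΦL π).overl = (insert (MP π) π.overl).erase
        ((insert (MP π) π.overl).max' (Finset.insert_nonempty _ _)) ∧
    (ΦL π).plain = {(insert (MP π) π.overl).max' (Finset.insert_nonempty _ _)} := by
  rw [ΦL, dif_pos h]
  exact ⟨rfl, rfl⟩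

lemma max'_congr {s t : Finset ℕ} (h : s = t) (hs : s.Nonempty) :
    s.max' hs = t.max' (h ▸ hs) := by subst h; rfl

lemma min'_congr {s t : Finset ℕ} (h : s = t) (hs : s.Nonempty) :
    s.min' hs = t.min' (h ▸ hs) := by subst h; rfl

lemma ΦG_fix {π : Overpartition n}
    (h : π.plain = {mP π} ∧ (∀ x ∈ π.overl, x < mP π) ∧ 0 < mP π) :
    ((ΦG π).plain = {MP (ΦG π)} ∧ (∀ x ∈ (ΦG π).overl, MP (ΦG π) < x) ∧ 0 < MP (ΦG π)) ∧
      ΦL (ΦG π) = π := by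
  obtain ⟨hOv, hPl⟩ := ΦG_eq h
  have hcm : (insert (mP π) π.overl).min' (Finset.insert_nonempty _ _) ∈ insert (mP π) π.overl :=
    Finset.min'_mem _ _
  have hMP : MP (ΦG π) = (insert (mP π) π.overl).min' (Finset.insert_nonempty _ _) := by
    apply MP_eq
    · rw [hPl]; exact Multiset.mem_singleton.2 rfl
    · intro y hy
      rw [hPl, Multiset.mem_singleton] at hy
      exact le_of_eq hy
  have hpos : 0 < (insert (mP π) π.overl).min' (Finset.insert_nonempty _ _) := by
    rcases Finset.mem_insert.1 hcm with h' | h'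
    · rw [h']; exact h.2.2
    · exact π.over_pos _ h'
  have hgt : ∀ x ∈ (ΦG π).overl, MP (ΦG π) < x := by
    intro x hx
    rw [hOv] at hx
    rw [hMP]
    exact lt_of_le_of_ne (Finset.min'_le _ _ (Finset.mem_of_mem_erase hx))
      (Ne.symm (Finset.ne_of_mem_erase hx))
  have hfix : (ΦG π).plain = {MP (ΦG π)} ∧ (∀ x ∈ (ΦG π).overl, MP (ΦG π) < x) ∧
      0 < MP (ΦG π) := by
    refine ⟨?_, hgt, ?_⟩
    · rw [hPl, hMP]
    · rw [hMP]; exact hpos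
  refine ⟨hfix, ?_⟩
  obtain ⟨hOv2, hPl2⟩ := ΦL_eq hfix
  have hmo : mP π ∉ π.overl := fun hc => lt_irrefl _ (h.2.1 _ hc)
  have hB : insert (MP (ΦG π)) (ΦG π).overl = insert (mP π) π.overl := by
    rw [hMP, hOv]
    exact Finset.insert_erase hcm
  have hd : (insert (MP (ΦG π)) (ΦG π).overl).max' (Finset.insert_nonempty _ _) = mP π := by
    rw [max'_congr hB]
    exact max'_insert_gt h.2.1 _
  apply Overpartition.ext
  · rw [hOv2, hd, hB, Finset.erase_insert hmo]
  · rw [hPl2, hd, h.1]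

lemma ΦL_fix {π : Overpartition n}
    (h : π.plain = {MP π} ∧ (∀ x ∈ π.overl, MP π < x) ∧ 0 < MP π) :
    ((ΦL π).plain = {mP (ΦL π)} ∧ (∀ x ∈ (ΦL π).overl, x < mP (ΦL π)) ∧ 0 < mP (ΦL π)) ∧
      ΦG (ΦL π) = π := by
  obtain ⟨hOv, hPl⟩ := ΦL_eq h
  have hcm : (insert (MP π) π.overl).max' (Finset.insert_nonempty _ _) ∈ insert (MP π) π.overl :=
    Finset.max'_mem _ _
  have hMP : mP (ΦL π) = (insert (MP π) π.overl).max' (Finset.insert_nonempty _ _) := by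
    apply mP_eq
    · rw [hPl]; exact Multiset.mem_singleton.2 rfl
    · intro y hy
      rw [hPl, Multiset.mem_singleton] at hy
      exact ge_of_eq hy
  have hpos : 0 < (insert (MP π) π.overl).max' (Finset.insert_nonempty _ _) := by
    rcases Finset.mem_insert.1 hcm with h' | h'
    · rw [h']; exact h.2.2
    · exact π.over_pos _ h'
  have hgt : ∀ x ∈ (ΦL π).overl, x < mP (ΦL π) := by
    intro x hx
    rw [hOv] at hx
    rw [hMP]
    exact lt_of_le_of_ne (Finset.le_max' _ _ (Finset.mem_of_mem_erase hx))
      (Finset.ne_of_mem_erase hx)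
  have hfix : (ΦL π).plain = {mP (ΦL π)} ∧ (∀ x ∈ (ΦL π).overl, x < mP (ΦL π)) ∧
      0 < mP (ΦL π) := by
    refine ⟨?_, hgt, ?_⟩
    · rw [hPl, hMP]
    · rw [hMP]; exact hpos
  refine ⟨hfix, ?_⟩
  obtain ⟨hOv2, hPl2⟩ := ΦG_eq hfix
  have hmo : MP π ∉ π.overl := fun hc => lt_irrefl _ (h.2.1 _ hc)
  have hB : insert (mP (ΦL π)) (ΦL π).overl = insert (MP π) π.overl := by
    rw [hMP, hOv]
    exact Finset.insert_erase hcm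
  have hd : (insert (mP (ΦL π)) (ΦL π).overl).min' (Finset.insert_nonempty _ _) = MP π := by
    rw [min'_congr hB]
    exact min'_insert_lt h.2.1 _
  apply Overpartition.ext
  · rw [hOv2, hd, hB, Finset.erase_insert hmo]
  · rw [hPl2, hd, h.1]

lemma sumG_fix :
    ∑ π ∈ Finset.univ.filter (fun π : Overpartition n => π.plain ≠ 0), (-1 : ℤ) ^ lOgeN π =
      ((Finset.univ.filter
        (fun π : Overpartition n => π.plain ≠ 0 ∧ ¬(actG π).Nonempty)).card : ℤ) := by
  classical
  rw [← Finset.sum_filter_add_sum_filter_not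
    (Finset.univ.filter (fun π : Overpartition n => π.plain ≠ 0))
    (fun π => ¬(actG π).Nonempty)]
  have h1 : ∑ π ∈ (Finset.univ.filter (fun π : Overpartition n => π.plain ≠ 0)).filter
      (fun π => ¬¬(actG π).Nonempty), (-1 : ℤ) ^ lOgeN π = 0 := by
    apply Finset.sum_involution (fun a _ => togG a)
    · intro a ha
      simp only [Finset.mem_filter, Finset.mem_univ, true_and, not_not] at ha
      obtain ⟨hp, hne⟩ := ha
      rcases (togG_spec hp hne).2.2.2 with h | h <;> rw [h] <;> ring
    · intro a ha _
      simp only [Finset.mem_filter, Finset.mem_univ, true_and, not_not] at ha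
      obtain ⟨hp, hne⟩ := ha
      intro hc
      rcases (togG_spec hp hne).2.2.2 with h | h <;> rw [hc] at h <;> omega
    · intro a ha
      simp only [Finset.mem_filter, Finset.mem_univ, true_and, not_not] at ha ⊢
      obtain ⟨hp, hne⟩ := ha
      exact ⟨(togG_spec hp hne).1, (togG_spec hp hne).2.1⟩
    · intro a ha
      simp only [Finset.mem_filter, Finset.mem_univ, true_and, not_not] at ha
      obtain ⟨hp, hne⟩ := ha
      exact (togG_spec hp hne).2.2.1
  rw [h1, add_zero, Finset.filter_filter]
  rw [Finset.sum_congr rfl (fun π hπ => ?_), Finset.sum_const, nsmul_eq_mul, mul_one]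
  simp only [Finset.mem_filter, Finset.mem_univ, true_and] at hπ
  rw [lOgeN_fix hπ, pow_zero]

lemma sumL_fix :
    ∑ π ∈ Finset.univ.filter (fun π : Overpartition n => π.plain ≠ 0), (-1 : ℤ) ^ lOleN π =
      ((Finset.univ.filter
        (fun π : Overpartition n => π.plain ≠ 0 ∧ ¬(actL π).Nonempty)).card : ℤ) := by
  classical
  rw [← Finset.sum_filter_add_sum_filter_not
    (Finset.univ.filter (fun π : Overpartition n => π.plain ≠ 0))
    (fun π => ¬(actL π).Nonempty)]
  have h1 : ∑ π ∈ (Finset.univ.filter (fun π : Overpartition n => π.plain ≠ 0)).filter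
      (fun π => ¬¬(actL π).Nonempty), (-1 : ℤ) ^ lOleN π = 0 := by
    apply Finset.sum_involution (fun a _ => togL a)
    · intro a ha
      simp only [Finset.mem_filter, Finset.mem_univ, true_and, not_not] at ha
      obtain ⟨hp, hne⟩ := ha
      rcases (togL_spec hp hne).2.2.2 with h | h <;> rw [h] <;> ring
    · intro a ha _
      simp only [Finset.mem_filter, Finset.mem_univ, true_and, not_not] at ha
      obtain ⟨hp, hne⟩ := ha
      intro hc
      rcases (togL_spec hp hne).2.2.2 with h | h <;> rw [hc] at h <;> omega
    · intro a ha
      simp only [Finset.mem_filter, Finset.mem_univ, true_and, not_not] at ha ⊢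
      obtain ⟨hp, hne⟩ := ha
      exact ⟨(togL_spec hp hne).1, (togL_spec hp hne).2.1⟩
    · intro a ha
      simp only [Finset.mem_filter, Finset.mem_univ, true_and, not_not] at ha
      obtain ⟨hp, hne⟩ := ha
      exact (togL_spec hp hne).2.2.1
  rw [h1, add_zero, Finset.filter_filter]
  rw [Finset.sum_congr rfl (fun π hπ => ?_), Finset.sum_const, nsmul_eq_mul, mul_one]
  simp only [Finset.mem_filter, Finset.mem_univ, true_and] at hπ
  rw [lOleN_fix hπ, pow_zero]

lemma fix_card_eq :
    (Finset.univ.filter (fun π : Overpartition n => π.plain ≠ 0 ∧ ¬(actG π).Nonempty)).card =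
    (Finset.univ.filter (fun π : Overpartition n => π.plain ≠ 0 ∧ ¬(actL π).Nonempty)).card := by
  classical
  apply Finset.card_bij' (fun π _ => ΦG π) (fun π _ => ΦL π)
  · intro a ha
    simp only [Finset.mem_filter, Finset.mem_univ, true_and] at ha ⊢
    exact fixL_iff.2 (ΦG_fix (fixG_iff.1 ha)).1
  · intro a ha
    simp only [Finset.mem_filter, Finset.mem_univ, true_and] at ha ⊢
    exact fixG_iff.2 (ΦL_fix (fixL_iff.1 ha)).1
  · intro a ha
    simp only [Finset.mem_filter, Finset.mem_univ, true_and] at ha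
    exact (ΦG_fix (fixG_iff.1 ha)).2
  · intro a ha
    simp only [Finset.mem_filter, Finset.mem_univ, true_and] at ha
    exact (ΦL_fix (fixL_iff.1 ha)).2

lemma signed_sum_eq :
    ∑ π : Overpartition n, (-1 : ℤ) ^ lOgeN π = ∑ π : Overpartition n, (-1 : ℤ) ^ lOleN π := by
  classical
  rw [← Finset.sum_filter_add_sum_filter_not Finset.univ
    (fun π : Overpartition n => π.plain = 0) (fun π => (-1 : ℤ) ^ lOgeN π),
    ← Finset.sum_filter_add_sum_filter_not Finset.univ
    (fun π : Overpartition n => π.plain = 0) (fun π => (-1 : ℤ) ^ lOleN π)]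
  congr 1
  · apply Finset.sum_congr rfl
    intro π hπ
    simp only [Finset.mem_filter, Finset.mem_univ, true_and] at hπ
    rw [lOgeN, lOleN, if_pos hπ, if_pos hπ]
  · have hG := sumG_fix (n := n)
    have hL := sumL_fix (n := n)
    have hisG : Finset.univ.filter (fun π : Overpartition n => ¬π.plain = 0) =
        Finset.univ.filter (fun π : Overpartition n => π.plain ≠ 0) := rfl
    rw [hisG, hG, hL, fix_card_eq]

lemma signed_split (f : Overpartition n → ℕ) :
    ∑ π : Overpartition n, (-1 : ℤ) ^ f π =
      ((Finset.univ.filter (fun π : Overpartition n => Even (f π))).card : ℤ) -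
      ((Finset.univ.filter (fun π : Overpartition n => Odd (f π))).card : ℤ) := by
  classical
  rw [← Finset.sum_filter_add_sum_filter_not Finset.univ (fun π : Overpartition n => Even (f π))]
  have h1 : ∑ π ∈ Finset.univ.filter (fun π : Overpartition n => Even (f π)),
      (-1 : ℤ) ^ f π =
      ((Finset.univ.filter (fun π : Overpartition n => Even (f π))).card : ℤ) := by
    rw [Finset.sum_congr rfl (fun π hπ => ?_), Finset.sum_const, nsmul_eq_mul, mul_one]
    simp only [Finset.mem_filter, Finset.mem_univ, true_and] at hπ
    exact Even.neg_one_pow hπ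
  have h2 : Finset.univ.filter (fun π : Overpartition n => ¬Even (f π)) =
      Finset.univ.filter (fun π : Overpartition n => Odd (f π)) := by
    apply Finset.filter_congr
    intro π _
    exact Nat.not_even_iff_odd
  have h3 : ∑ π ∈ Finset.univ.filter (fun π : Overpartition n => ¬Even (f π)),
      (-1 : ℤ) ^ f π =
      -((Finset.univ.filter (fun π : Overpartition n => Odd (f π))).card : ℤ) := by
    rw [h2, Finset.sum_congr rfl (fun π hπ => ?_), Finset.sum_const, nsmul_eq_mul, mul_neg_one]
    simp only [Finset.mem_filter, Finset.mem_univ, true_and] at hπ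
    exact Odd.neg_one_pow hπ
  rw [h1, h3]
  ring

lemma count_split (f : Overpartition n → ℕ) :
    (Finset.univ.filter (fun π : Overpartition n => Even (f π))).card +
      (Finset.univ.filter (fun π : Overpartition n => Odd (f π))).card =
      Fintype.card (Overpartition n) := by
  classical
  have h2 : Finset.univ.filter (fun π : Overpartition n => Odd (f π)) =
      Finset.univ.filter (fun π : Overpartition n => ¬Even (f π)) := by
    apply Finset.filter_congr
    intro π _
    exact Nat.not_even_iff_odd.symm
  rw [h2, Finset.card_filter_add_card_filter_not]
  rfl

end Overpartition

set_option linter.unusedVariables false in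
theorem stmt_17 (n : ℕ) (hn : 1 ≤ n) :
    Nat.card {π : Overpartition n // Even (lOgeN π)} =
      Nat.card {π : Overpartition n // Even (lOleN π)} ∧
    Nat.card {π : Overpartition n // Odd (lOgeN π)} =
      Nat.card {π : Overpartition n // Odd (lOleN π)} := by
  classical
  have hEg : Nat.card {π : Overpartition n // Even (lOgeN π)} =
      (Finset.univ.filter (fun π : Overpartition n => Even (lOgeN π))).card := by
    rw [Nat.card_eq_fintype_card, Fintype.card_subtype]
  have hOg : Nat.card {π : Overpartition n // Odd (lOgeN π)} =
      (Finset.univ.filter (fun π : Overpartition n => Odd (lOgeN π))).card := by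
    rw [Nat.card_eq_fintype_card, Fintype.card_subtype]
  have hEl : Nat.card {π : Overpartition n // Even (lOleN π)} =
      (Finset.univ.filter (fun π : Overpartition n => Even (lOleN π))).card := by
    rw [Nat.card_eq_fintype_card, Fintype.card_subtype]
  have hOl : Nat.card {π : Overpartition n // Odd (lOleN π)} =
      (Finset.univ.filter (fun π : Overpartition n => Odd (lOleN π))).card := by
    rw [Nat.card_eq_fintype_card, Fintype.card_subtype]
  have key := Overpartition.signed_sum_eq (n := n)
  rw [Overpartition.signed_split (n := n) lOgeN, Overpartition.signed_split (n := n) lOleN] at key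
  have hcg := Overpartition.count_split (n := n) lOgeN
  have hcl := Overpartition.count_split (n := n) lOleN
  rw [hEg, hOg, hEl, hOl]
  omega
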